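/- Let Fib be the infinite Fibonacci word and F_k the Fibonacci numbers (F_0 = F_1 = 1, F_2 = 2, F_3 = 3, F_4 = 5, ...). For every k ≥ 4: (a) the longest proper border of the prefix Fib[0..F_k−1) has length F_{k−2}−1, i.e., it equals Fib[0..F_{k−2}−1); and (b) the longest proper border of the prefix Fib[0..2F_k−1) has length F_k−1, i.e., it equals Fib[0..F_k−1). -/

import Mathlib

section Defs

variable {α : Type*}

/-- `C` occurs in `T` at starting position `i`. -/
def OccursAt (C T : List α) (i : ℕ) : Prop :=
  i + C.length ≤ T.length ∧ (T.drop i).take C.length = C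

/-- `C` is a cover of `T`: `C` occurs in `T` and every position of `T`
lies within an occurrence of `C`. -/
def IsCover (C T : List α) : Prop :=
  (∃ i, OccursAt C T i) ∧
    ∀ q, q < T.length → ∃ i, OccursAt C T i ∧ i ≤ q ∧ q < i + C.length

/-- A border of `T` is both a prefix and a suffix of `T`. -/
def IsBorder (B T : List α) : Prop := B <+: T ∧ B <:+ T

/-- `p` is a period of `U`: `U[i] = U[i+p]` for all `0 ≤ i < |U| - p`. -/
def IsPeriod (p : ℕ) (U : List α) : Prop :=
  0 < p ∧ ∀ i, i + p < U.length → U[i]? = U[i + p]?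

/-- `U` is aperiodic: its smallest period `p` satisfies `2p > |U|`
(equivalently, every period `p` of `U` satisfies `2p > |U|`). -/
def StrAperiodic (U : List α) : Prop := ∀ p, IsPeriod p U → U.length < 2 * p

/-- A nonempty string `X` is primitive if `X = Y^t` implies `t = 1`. -/
def StrPrimitive (X : List α) : Prop :=
  X ≠ [] ∧ ∀ (Y : List α) (t : ℕ), X = (List.replicate t Y).flatten → t = 1

/-- A string is superprimitive if it has no proper cover. -/
def Superprimitive (T : List α) : Prop :=
  ¬ ∃ C : List α, IsCover C T ∧ C.length < T.length

/-- The length of the shortest cover of `T`. -/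
noncomputable def covLen (T : List α) : ℕ :=
  sInf {c | ∃ C : List α, C.length = c ∧ IsCover C T}

/-- `{a, a+p, ..., a+(t-1)p}` is a maximal arithmetic progression with
difference `p` inside the set `S`. -/
def MaxProg (S : Set ℕ) (p a t : ℕ) : Prop :=
  0 < t ∧ (∀ r, r < t → a + r * p ∈ S) ∧ (∀ b, b + p = a → b ∉ S) ∧ a + t * p ∉ S

end Defs

/-- Fibonacci strings over `Bool` (`true` = a, `false` = b):
`Fib_0 = b`, `Fib_1 = a`, `Fib_m = Fib_{m-1} Fib_{m-2}`. -/
def fibWord : ℕ → List Bool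
  | 0 => [false]
  | 1 => [true]
  | (m + 2) => fibWord (m + 1) ++ fibWord m

/-- Fibonacci numbers `F_k = |Fib_k|`: `F_0 = F_1 = 1`, `F_2 = 2`, `F_3 = 3`, ... -/
def F (k : ℕ) : ℕ := (fibWord k).length

/-- The `n`-th letter of the infinite Fibonacci word (each `Fib_m`, `m ≥ 1`,
is a prefix of the infinite word, and `F_{n+2} > n`). -/
def fibInf (n : ℕ) : Bool := (fibWord (n + 2)).getD n false

/-- The length-`ℓ` prefix `Fib[0..ℓ)` of the infinite Fibonacci word. -/
def fibPrefix (ℓ : ℕ) : List Bool := (List.range ℓ).map fibInf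

/-- `Cov_Fib[ℓ]`: the length of the shortest cover of `Fib[0..ℓ)`. -/
noncomputable def covFib (ℓ : ℕ) : ℕ := covLen (fibPrefix ℓ)


section Aux

lemma fibWord_succ_succ (m : ℕ) : fibWord (m + 2) = fibWord (m + 1) ++ fibWord m := rfl

lemma F_add (m : ℕ) : F (m + 2) = F (m + 1) + F m := by
  simp [F, fibWord_succ_succ]

lemma F_pos (m : ℕ) : 1 ≤ F m := by
  induction m using Nat.strong_induction_on with
  | _ m ih =>
    match m with
    | 0 => decide
    | 1 => decide
    | (m+2) =>
      have := ih (m+1) (by omega)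
      rw [F_add]; omega

lemma self_lt_F (n : ℕ) : n + 2 ≤ F (n + 2) := by
  induction n using Nat.strong_induction_on with
  | _ n ih =>
    match n with
    | 0 => decide
    | 1 => decide
    | (n+2) =>
      show n + 4 ≤ F (n + 4)
      have h1 : n + 3 ≤ F (n + 3) := ih (n+1) (by omega)
      have h2 := F_pos (n+2)
      have e : F (n + 4) = F (n + 3) + F (n + 2) := F_add (n+2)
      omega

lemma fibWord_prefix : ∀ {m m' : ℕ}, 1 ≤ m → m ≤ m' → fibWord m <+: fibWord m' := by
  intro m m' h1 h2
  induction m' with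
  | zero => omega
  | succ n ih =>
    by_cases h : m = n + 1
    · subst h; exact List.prefix_rfl
    · have hm : m ≤ n := by omega
      obtain ⟨t, rfl⟩ : ∃ t, n = t + 1 := ⟨n - 1, by omega⟩
      exact (ih hm).trans (by rw [fibWord_succ_succ]; exact List.prefix_append _ _)

lemma prefix_getElem? {L M : List Bool} {n : ℕ} (h : L <+: M) (hn : n < L.length) :
    M[n]? = L[n]? := by
  obtain ⟨t, rfl⟩ := h
  rw [List.getElem?_append_left hn]

lemma fibWord_getElem? {m n : ℕ} (h1 : 1 ≤ m) (hn : n < F m) :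
    (fibWord m)[n]? = some (fibInf n) := by
  have hn2 : n < F (n + 2) := by have := self_lt_F n; omega
  have key : (fibWord m)[n]? = (fibWord (n+2))[n]? := by
    rcases le_total m (n+2) with h | h
    · exact (prefix_getElem? (fibWord_prefix h1 h) hn).symm
    · exact prefix_getElem? (fibWord_prefix (by omega) h) hn2
  rw [key, fibInf, List.getElem?_eq_getElem hn2, List.getD_eq_getElem?_getD,
    List.getElem?_eq_getElem hn2]
  rfl

lemma length_fibPrefix (ℓ : ℕ) : (fibPrefix ℓ).length = ℓ := by simp [fibPrefix]

lemma fibPrefix_getElem? {n ℓ : ℕ} (h : n < ℓ) : (fibPrefix ℓ)[n]? = some (fibInf n) := by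
  simp [fibPrefix, h]

lemma fibPrefix_eq_take {m ℓ : ℕ} (h1 : 1 ≤ m) (h : ℓ ≤ F m) :
    fibPrefix ℓ = (fibWord m).take ℓ := by
  apply List.ext_getElem?
  intro n
  rw [List.getElem?_take]
  by_cases hn : n < ℓ
  · rw [if_pos hn, fibPrefix_getElem? hn, fibWord_getElem? h1 (by omega)]
  · rw [if_neg hn, List.getElem?_eq_none]
    rw [length_fibPrefix]; omega

lemma take_fibPrefix {a n : ℕ} (h : a ≤ n) : (fibPrefix n).take a = fibPrefix a := by
  simp [fibPrefix, ← List.map_take, List.take_range, min_eq_left h]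

lemma fibPrefix_prefix {a b : ℕ} (h : a ≤ b) : fibPrefix a <+: fibPrefix b := by
  rw [← take_fibPrefix h]; exact List.take_prefix _ _

lemma prefix_eq_fibPrefix {b : List Bool} {n : ℕ} (h : b <+: fibPrefix n) :
    b = fibPrefix b.length := by
  have hl : b.length ≤ n := by
    have := h.length_le; rwa [length_fibPrefix] at this
  conv_lhs => rw [List.prefix_iff_eq_take.mp h]
  exact take_fibPrefix hl

lemma isPeriod_fibPrefix_iff {p ℓ : ℕ} :
    IsPeriod p (fibPrefix ℓ) ↔ 0 < p ∧ ∀ i, i + p < ℓ → fibInf i = fibInf (i + p) := by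
  unfold IsPeriod
  rw [length_fibPrefix]
  constructor
  · rintro ⟨hp, h⟩
    refine ⟨hp, fun i hi => ?_⟩
    have := h i hi
    rw [fibPrefix_getElem? (by omega), fibPrefix_getElem? hi] at this
    exact Option.some.inj this
  · rintro ⟨hp, h⟩
    exact ⟨hp, fun i hi => by
      rw [fibPrefix_getElem? (by omega), fibPrefix_getElem? hi, h i hi]⟩

lemma drop_key (i : ℕ) :
    (fibPrefix (F (i + 2) - 1)).drop (F (i + 1)) = fibPrefix (F i - 1) := by
  match i with
  | 0 => decide
  | (i+1) =>
    show (fibPrefix (F (i + 3) - 1)).drop (F (i + 2)) = fibPrefix (F (i + 1) - 1)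
    have e3 : F (i + 3) = F (i + 2) + F (i + 1) := F_add (i+1)
    have hp1 := F_pos (i+1)
    have hp2 := F_pos (i+2)
    rw [fibPrefix_eq_take (m := i+3) (by omega) (by omega), fibWord_succ_succ,
      List.drop_take]
    have hd : ((fibWord (i+2) ++ fibWord (i+1)).drop (F (i+2))) = fibWord (i+1) :=
      List.drop_left
    rw [hd]
    have h2 : F (i + 3) - 1 - F (i + 2) = F (i + 1) - 1 := by omega
    rw [h2, ← fibPrefix_eq_take (by omega) (by omega)]

lemma fibInf_period {i n : ℕ} (h : n + F (i + 1) < F (i + 2) - 1) :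
    fibInf n = fibInf (n + F (i + 1)) := by
  have e : F (i + 2) = F (i + 1) + F i := F_add i
  have h1 : some (fibInf (n + F (i+1))) = (fibPrefix (F (i+2) - 1))[n + F (i+1)]? :=
    (fibPrefix_getElem? h).symm
  rw [show n + F (i+1) = F (i+1) + n by omega, ← List.getElem?_drop, drop_key i,
    fibPrefix_getElem? (by omega)] at h1
  rw [Nat.add_comm]
  exact (Option.some.inj h1).symm

lemma period_F (i : ℕ) : IsPeriod (F (i + 1)) (fibPrefix (F (i + 2) - 1)) := by
  rw [isPeriod_fibPrefix_iff]
  exact ⟨F_pos (i+1), fun n hn => fibInf_period hn⟩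

lemma Qmain : ∀ j p, IsPeriod p (fibPrefix (F (j + 2) - 1)) → F (j + 1) ≤ p := by
  intro j
  induction j using Nat.strong_induction_on with
  | _ j ih =>
    match j with
    | 0 => intro p hp; exact hp.1
    | 1 =>
      intro p hp
      rw [isPeriod_fibPrefix_iff] at hp
      obtain ⟨hp0, hp⟩ := hp
      show 2 ≤ p
      by_contra h
      have hp1 : p = 1 := by omega
      subst hp1
      have := hp 0 (by decide)
      revert this; decide
    | (i+2) =>
      intro p hp
      rw [isPeriod_fibPrefix_iff] at hp
      obtain ⟨hp0, hpp0⟩ := hp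
      have hpp : ∀ n, n + p < F (i + 4) - 1 → fibInf n = fibInf (n + p) := hpp0
      show F (i + 3) ≤ p
      by_contra hlt
      push_neg at hlt
      have e4 : F (i + 4) = F (i + 3) + F (i + 2) := F_add (i + 2)
      have e3 : F (i + 3) = F (i + 2) + F (i + 1) := F_add (i + 1)
      have e2 : F (i + 2) = F (i + 1) + F i := F_add i
      have f0 := F_pos i
      have f1 := F_pos (i + 1)
      -- Step 1: p is a period of the prefix of length F (i+3) - 1, so F (i+2) ≤ p
      have h1 : F (i + 2) ≤ p := by
        have hper : IsPeriod p (fibPrefix (F (i + 3) - 1)) := by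
          rw [isPeriod_fibPrefix_iff]
          exact ⟨hp0, fun n hn => hpp n (by omega)⟩
        exact ih (i + 1) (by omega) p hper
      -- Step 2: r := F (i+3) - p is a period of fibPrefix (F (i+2) - 1 + r)
      set r := F (i + 3) - p with hr
      have hr1 : 1 ≤ r := by omega
      have hr2 : r ≤ F (i + 1) := by omega
      have hq : IsPeriod (F (i + 3)) (fibPrefix (F (i + 4) - 1)) := period_F (i + 2)
      rw [isPeriod_fibPrefix_iff] at hq
      have hrper : ∀ n, n + r < F (i + 2) - 1 + r → fibInf n = fibInf (n + r) := by
        intro n hn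
        have hn' : n < F (i + 2) - 1 := by omega
        have hq1 : fibInf n = fibInf (n + F (i + 3)) := hq.2 n (by omega)
        have hp1 : fibInf (n + r) = fibInf (n + r + p) := hpp (n + r) (by omega)
        rw [show n + r + p = n + F (i + 3) by omega] at hp1
        rw [hq1, hp1]
      -- Step 3: so r is a period of fibPrefix (F (i+2) - 1), hence F (i+1) ≤ r, so r = F (i+1)
      have h2 : F (i + 1) ≤ r := by
        have hper : IsPeriod r (fibPrefix (F (i + 2) - 1)) := by
          rw [isPeriod_fibPrefix_iff]
          exact ⟨by omega, fun n hn => hrper n (by omega)⟩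
        exact ih i (by omega) r hper
      have hre : r = F (i + 1) := by omega
      -- Step 4: then r is a period of fibPrefix (F (i+3) - 1), contradicting F (i+2) ≤ r
      have h3 : F (i + 2) ≤ r := by
        have hper : IsPeriod r (fibPrefix (F (i + 3) - 1)) := by
          rw [isPeriod_fibPrefix_iff]
          exact ⟨by omega, fun n hn => hrper n (by omega)⟩
        exact ih (i + 1) (by omega) r hper
      omega

lemma drop_key2 (i : ℕ) :
    (fibPrefix (2 * F (i + 4) - 1)).drop (F (i + 4)) = fibPrefix (F (i + 4) - 1) := by
  have e5 : F (i + 5) = F (i + 4) + F (i + 3) := F_add (i + 3)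
  have e6 : F (i + 6) = F (i + 5) + F (i + 4) := F_add (i + 4)
  have e4 : F (i + 4) = F (i + 3) + F (i + 2) := F_add (i + 2)
  have f2 := F_pos (i + 2)
  have f3 := F_pos (i + 3)
  have hw6 : fibWord (i + 6) = fibWord (i + 4) ++ (fibWord (i + 3) ++ fibWord (i + 4)) := by
    rw [fibWord_succ_succ (i + 4), fibWord_succ_succ (i + 3), List.append_assoc]
  rw [fibPrefix_eq_take (m := i + 6) (by omega) (by omega), hw6, List.drop_take]
  have hd : ((fibWord (i+4) ++ (fibWord (i+3) ++ fibWord (i+4))).drop (F (i+4)))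
      = fibWord (i + 3) ++ fibWord (i + 4) := List.drop_left
  rw [hd]
  have h2 : 2 * F (i + 4) - 1 - F (i + 4) = F (i + 4) - 1 := by omega
  rw [h2, List.take_append,
    List.take_of_length_le (by show F (i+3) ≤ _; omega)]
  have h3 : F (i + 4) - 1 - (fibWord (i + 3)).length = F (i + 2) - 1 := by
    show F (i + 4) - 1 - F (i + 3) = F (i + 2) - 1; omega
  rw [h3, ← fibPrefix_eq_take (by omega) (by omega)]
  -- RHS: fibPrefix (F (i+4) - 1) = fibWord (i+3) ++ fibPrefix (F (i+2) - 1)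
  have hw4 : fibWord (i + 4) = fibWord (i + 3) ++ fibWord (i + 2) := fibWord_succ_succ (i + 2)
  have hrhs : fibPrefix (F (i + 4) - 1) = fibWord (i + 3) ++ fibPrefix (F (i + 2) - 1) := by
    rw [fibPrefix_eq_take (m := i + 4) (by omega) (by omega), hw4,
      List.take_append, List.take_of_length_le (by show F (i+3) ≤ _; omega), h3,
      ← fibPrefix_eq_take (by omega) (by omega)]
  rw [hrhs]

lemma border_period {b : List Bool} {n : ℕ} (hb : IsBorder b (fibPrefix n))
    (hlt : b.length < n) : IsPeriod (n - b.length) (fibPrefix n) := by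
  obtain ⟨hpre, hsuf⟩ := hb
  obtain ⟨s, hs⟩ := hsuf
  have hsl : s.length + b.length = n := by
    have := congrArg List.length hs
    simpa [length_fibPrefix] using this
  have hbe : b = fibPrefix b.length := prefix_eq_fibPrefix hpre
  rw [isPeriod_fibPrefix_iff]
  refine ⟨by omega, fun i hi => ?_⟩
  have hib : i < b.length := by omega
  have h1 : (fibPrefix n)[i + (n - b.length)]? = b[i]? := by
    rw [← hs, show i + (n - b.length) = s.length + i by omega,
      List.getElem?_append_right (by omega)]
    congr 1; omega
  have hb2 : b[i]? = some (fibInf i) := by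
    conv_lhs => rw [hbe]
    exact fibPrefix_getElem? hib
  rw [fibPrefix_getElem? hi, hb2] at h1
  exact (Option.some.inj h1).symm

end Aux

/-- For `k ≥ 4`: (a) the longest proper border of `Fib[0..F_k - 1)` is
`Fib[0..F_{k-2} - 1)`; (b) the longest proper border of `Fib[0..2F_k - 1)` is
`Fib[0..F_k - 1)`. (Every border is a prefix, hence equals the Fibonacci
prefix of its length.) -/
theorem stmt5 (k : ℕ) (hk : 4 ≤ k) :
    (IsBorder (fibPrefix (F (k - 2) - 1)) (fibPrefix (F k - 1)) ∧
      F (k - 2) - 1 < F k - 1 ∧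
      ∀ b : List Bool, IsBorder b (fibPrefix (F k - 1)) → b.length < F k - 1 →
        b.length ≤ F (k - 2) - 1 ∧ b = fibPrefix b.length) ∧
    (IsBorder (fibPrefix (F k - 1)) (fibPrefix (2 * F k - 1)) ∧
      F k - 1 < 2 * F k - 1 ∧
      ∀ b : List Bool, IsBorder b (fibPrefix (2 * F k - 1)) → b.length < 2 * F k - 1 →
        b.length ≤ F k - 1 ∧ b = fibPrefix b.length) := by
  obtain ⟨j, rfl⟩ : ∃ j, k = j + 4 := ⟨k - 4, by omega⟩
  have e2 : F (j + 2) = F (j + 1) + F j := F_add j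
  have e3 : F (j + 3) = F (j + 2) + F (j + 1) := F_add (j + 1)
  have e4 : F (j + 4) = F (j + 3) + F (j + 2) := F_add (j + 2)
  have e5 : F (j + 5) = F (j + 4) + F (j + 3) := F_add (j + 3)
  have f0 := F_pos j
  have f1 := F_pos (j + 1)
  have f2 := F_pos (j + 2)
  have f3 := F_pos (j + 3)
  have hk2 : j + 4 - 2 = j + 2 := by omega
  rw [hk2]
  have hdk : (fibPrefix (F (j + 4) - 1)).drop (F (j + 3)) = fibPrefix (F (j + 2) - 1) :=
    drop_key (j + 2)
  constructor
  · refine ⟨⟨fibPrefix_prefix (by omega), ?_⟩, by omega, ?_⟩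
    · rw [← hdk]; exact List.drop_suffix _ _
    · intro b hb hlen
      refine ⟨?_, prefix_eq_fibPrefix hb.1⟩
      have hper := border_period hb hlen
      have hQ : F (j + 3) ≤ F (j + 4) - 1 - b.length := Qmain (j + 2) _ hper
      omega
  · refine ⟨⟨fibPrefix_prefix (by omega), ?_⟩, by omega, ?_⟩
    · rw [← drop_key2 j]; exact List.drop_suffix _ _
    · intro b hb hlen
      refine ⟨?_, prefix_eq_fibPrefix hb.1⟩
      have hper := border_period hb hlen
      have hp' : IsPeriod (2 * F (j + 4) - 1 - b.length) (fibPrefix (F (j + 5) - 1)) := by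
        rw [isPeriod_fibPrefix_iff] at hper ⊢
        exact ⟨hper.1, fun n hn => hper.2 n (by omega)⟩
      have hQ : F (j + 4) ≤ 2 * F (j + 4) - 1 - b.length := Qmain (j + 3) _ hp'
      omega
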